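/- Under the hypotheses of the previous recursion, with additionally ‖Ȳⱼ‖ ≤ β_kʲ ‖L_k‖ ‖C‖ where β_k := ‖L_k Π‖, one has ‖Y_{j+1} - Ȳ_{j+1}‖ ≤ ‖C‖ (ε_k) [ β^{j+1}·(‖𝓛⁻¹‖/ε_k·0 omitted) + ‖Π‖‖L_k‖ ∑_{t=0}^j β^{j-t} β_k^t ] + β^{j+1}ε_k‖C‖, i.e., precisely: ‖Y_{j+1} - Ȳ_{j+1}‖ ≤ ‖C‖ε_k [ β^{j+1} + ‖Π‖‖L_k‖ ∑_{t=0}^{j} β^{j-t} β_k^t ], using ‖Y₀ - Ȳ₀‖ ≤ ε_k‖C‖. -/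

import Mathlib

open Matrix Finset

attribute [local instance] Matrix.frobeniusNormedAddCommGroup Matrix.frobeniusNormedSpace

noncomputable instance matrixFrobeniusCLMOpNorm {n : ℕ} :
    Norm (Matrix (Fin n) (Fin n) ℝ →L[ℝ] Matrix (Fin n) (Fin n) ℝ) :=
  ContinuousLinearMap.hasOpNorm

/-- **Refined bound for approximate Neumann iterates.** With `‖𝓛⁻¹ - L_k‖ ≤ ε_k`,
`β = ‖𝓛⁻¹Π‖`, `β_k = ‖L_kΠ‖`, and the recursively defined iterates
`Y₀ = 𝓛⁻¹(C)`, `Y_{j+1} = -𝓛⁻¹(Π(Yⱼ))`, `Ȳ₀ = L_k(C)`, `Ȳ_{j+1} = -L_k(Π(Ȳⱼ))`,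
one has (using `‖Ȳⱼ‖ ≤ β_kʲ‖L_k‖‖C‖` and `‖Y₀ - Ȳ₀‖ ≤ ε_k‖C‖`)
`‖Y_{j+1} - Ȳ_{j+1}‖ ≤ ‖C‖ε_k [ β^{j+1} + ‖Π‖‖L_k‖ ∑_{t=0}^j β^{j-t} β_kᵗ ]`. -/
theorem approx_neumann_refined_bound {n : ℕ}
    (L Pi' Linv Lk : Matrix (Fin n) (Fin n) ℝ →L[ℝ] Matrix (Fin n) (Fin n) ℝ)
    (hinv₁ : Linv.comp L = ContinuousLinearMap.id ℝ _)
    (hinv₂ : L.comp Linv = ContinuousLinearMap.id ℝ _)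
    (εk : ℝ) (hεk : ‖Linv - Lk‖ ≤ εk)
    (β βk : ℝ) (hβ : β = ‖Linv.comp Pi'‖) (hβk : βk = ‖Lk.comp Pi'‖)
    (C : Matrix (Fin n) (Fin n) ℝ)
    (Y Yb : ℕ → Matrix (Fin n) (Fin n) ℝ)
    (hY0 : Y 0 = Linv C) (hYrec : ∀ j, Y (j + 1) = -Linv (Pi' (Y j)))
    (hYb0 : Yb 0 = Lk C) (hYbrec : ∀ j, Yb (j + 1) = -Lk (Pi' (Yb j))) :
    (∀ j : ℕ, ‖Yb j‖ ≤ βk ^ j * ‖Lk‖ * ‖C‖) ∧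
      ∀ j : ℕ, ‖Y (j + 1) - Yb (j + 1)‖ ≤
        ‖C‖ * εk * (β ^ (j + 1) +
          ‖Pi'‖ * ‖Lk‖ * ∑ t ∈ Finset.range (j + 1), β ^ (j - t) * βk ^ t) := by
  have hε0 : 0 ≤ εk := le_trans (ContinuousLinearMap.opNorm_nonneg _) hεk
  have hβ0 : 0 ≤ β := hβ ▸ ContinuousLinearMap.opNorm_nonneg _
  have h1 : ∀ j : ℕ, ‖Yb j‖ ≤ βk ^ j * ‖Lk‖ * ‖C‖ := by
    intro j
    induction j with
    | zero => simp only [pow_zero, one_mul, hYb0]; exact Lk.le_opNorm C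
    | succ j ih =>
      rw [hYbrec, norm_neg]
      calc ‖Lk (Pi' (Yb j))‖ = ‖(Lk.comp Pi') (Yb j)‖ := rfl
        _ ≤ ‖Lk.comp Pi'‖ * ‖Yb j‖ := (Lk.comp Pi').le_opNorm _
        _ ≤ βk * (βk ^ j * ‖Lk‖ * ‖C‖) := by
            rw [hβk]
            exact mul_le_mul_of_nonneg_left (hβk ▸ ih) (ContinuousLinearMap.opNorm_nonneg _)
        _ = βk ^ (j + 1) * ‖Lk‖ * ‖C‖ := by ring
  refine ⟨h1, ?_⟩
  have hbase : ‖Y 0 - Yb 0‖ ≤ εk * ‖C‖ := by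
    have : Y 0 - Yb 0 = (Linv - Lk) C := by
      rw [hY0, hYb0]; simp
    rw [this]
    calc ‖(Linv - Lk) C‖ ≤ ‖Linv - Lk‖ * ‖C‖ := (Linv - Lk).le_opNorm C
      _ ≤ εk * ‖C‖ := mul_le_mul_of_nonneg_right hεk (norm_nonneg _)
  have key : ∀ j : ℕ, ‖Y (j + 1) - Yb (j + 1)‖ ≤
      β * ‖Y j - Yb j‖ + εk * ‖Pi'‖ * ‖Yb j‖ := by
    intro j
    have heq : Y (j + 1) - Yb (j + 1) =
        -((Linv.comp Pi') (Y j - Yb j)) - ((Linv - Lk) (Pi' (Yb j))) := by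
      rw [hYrec, hYbrec]
      simp [ContinuousLinearMap.comp_apply, ContinuousLinearMap.sub_apply, map_sub]
      abel
    rw [heq]
    calc ‖-((Linv.comp Pi') (Y j - Yb j)) - ((Linv - Lk) (Pi' (Yb j)))‖
        ≤ ‖-((Linv.comp Pi') (Y j - Yb j))‖ + ‖(Linv - Lk) (Pi' (Yb j))‖ :=
          norm_sub_le _ _
      _ = ‖(Linv.comp Pi') (Y j - Yb j)‖ + ‖(Linv - Lk) (Pi' (Yb j))‖ := by
          rw [norm_neg]
      _ ≤ β * ‖Y j - Yb j‖ + εk * ‖Pi'‖ * ‖Yb j‖ := by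
          gcongr
          · rw [hβ]; exact (Linv.comp Pi').le_opNorm _
          · calc ‖(Linv - Lk) (Pi' (Yb j))‖ ≤ ‖Linv - Lk‖ * ‖Pi' (Yb j)‖ :=
                (Linv - Lk).le_opNorm _
              _ ≤ εk * (‖Pi'‖ * ‖Yb j‖) := by
                  apply mul_le_mul hεk (Pi'.le_opNorm _) (norm_nonneg _) hε0
              _ = εk * ‖Pi'‖ * ‖Yb j‖ := by ring
  intro j
  induction j with
  | zero =>
    have := key 0
    have h10 : ‖Yb 0‖ ≤ ‖Lk‖ * ‖C‖ := by simpa using h1 0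
    have hPi0 : (0:ℝ) ≤ εk * ‖Pi'‖ := mul_nonneg hε0 (ContinuousLinearMap.opNorm_nonneg _)
    have : ‖Y 1 - Yb 1‖ ≤ β * (εk * ‖C‖) + εk * ‖Pi'‖ * (‖Lk‖ * ‖C‖) := by
      calc ‖Y 1 - Yb 1‖ ≤ β * ‖Y 0 - Yb 0‖ + εk * ‖Pi'‖ * ‖Yb 0‖ := key 0
        _ ≤ β * (εk * ‖C‖) + εk * ‖Pi'‖ * (‖Lk‖ * ‖C‖) := by gcongr
    simpa [Finset.sum_range_one] using this.trans_eq (by ring)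
  | succ j ih =>
    have hYb1 : ‖Yb (j + 1)‖ ≤ βk ^ (j + 1) * ‖Lk‖ * ‖C‖ := h1 (j + 1)
    have hsum : ∑ t ∈ Finset.range (j + 2), β ^ (j + 1 - t) * βk ^ t
        = β * (∑ t ∈ Finset.range (j + 1), β ^ (j - t) * βk ^ t) + βk ^ (j + 1) := by
      rw [Finset.sum_range_succ, Finset.mul_sum]
      congr 1
      · apply Finset.sum_congr rfl
        intro t ht
        have ht' : t ≤ j := by simpa [Nat.lt_succ_iff] using ht
        have : j + 1 - t = (j - t) + 1 := by omega
        rw [this, pow_succ]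
        ring
      · simp
    calc ‖Y (j + 2) - Yb (j + 2)‖
        ≤ β * ‖Y (j + 1) - Yb (j + 1)‖ + εk * ‖Pi'‖ * ‖Yb (j + 1)‖ := key (j + 1)
      _ ≤ β * (‖C‖ * εk * (β ^ (j + 1) +
            ‖Pi'‖ * ‖Lk‖ * ∑ t ∈ Finset.range (j + 1), β ^ (j - t) * βk ^ t))
          + εk * ‖Pi'‖ * (βk ^ (j + 1) * ‖Lk‖ * ‖C‖) := by
          gcongr
          exact mul_nonneg hε0 (ContinuousLinearMap.opNorm_nonneg _)
      _ = ‖C‖ * εk * (β ^ (j + 2) +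
            ‖Pi'‖ * ‖Lk‖ * ∑ t ∈ Finset.range (j + 2), β ^ (j + 1 - t) * βk ^ t) := by
          rw [hsum]; ring
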